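/- The set of 312-avoiding TITOs is finite. Moreover, the poset of 312-avoiding TITOs under the Dyer order is order-isomorphic to the poset of 132-avoiding TITOs under the Dyer order, and the poset of 312-avoiding TITOs is self-dual: there exists a bijection φ from the set of 312-avoiding TITOs to itself such that for all 312-avoiding TITOs x and y, Inv(x) ⊆ Inv(y) if and only if Inv(φ(y)) ⊆ Inv(φ(x)). -/

import Mathlib

structure TITO (n : ℕ) where
  rel : ℤ → ℤ → Prop
  refl : ∀ a, rel a a
  antisymm : ∀ a b, rel a b → rel b a → a = b
  trans : ∀ a b c, rel a b → rel b c → rel a c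
  total : ∀ a b, rel a b ∨ rel b a
  invariant : ∀ a b, rel a b ↔ rel (a + n) (b + n)

namespace TITO

variable {n : ℕ}

/-- The inversion set of a TITO. -/
def Inversions (t : TITO n) : Set (ℤ × ℤ) := {p | p.1 < p.2 ∧ t.rel p.2 p.1}

/-- A TITO is 312-avoiding if there are no integers `a < b < c` with `c ≼ a` and `a ≼ b`. -/
def Avoids312 (t : TITO n) : Prop :=
  ¬ ∃ a b c : ℤ, a < b ∧ b < c ∧ t.rel c a ∧ t.rel a b

/-- A TITO is 132-avoiding if there are no integers `a < b < c` with `a ≼ c` and `c ≼ b`. -/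
def Avoids132 (t : TITO n) : Prop :=
  ¬ ∃ a b c : ℤ, a < b ∧ b < c ∧ t.rel a c ∧ t.rel c b

/-- A set is order-convex for a TITO. -/
def OrderConvex (t : TITO n) (S : Set ℤ) : Prop :=
  ∀ x ∈ S, ∀ z ∈ S, ∀ y : ℤ, t.rel x y → t.rel y z → y ∈ S

/-- A block of a TITO: an order-convex set with no minimal and no maximal element in which
all intervals are finite. -/
def IsBlock (t : TITO n) (I : Set ℤ) : Prop :=
  t.OrderConvex I ∧
  (∀ a ∈ I, ∃ b ∈ I, b ≠ a ∧ t.rel b a) ∧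
  (∀ a ∈ I, ∃ b ∈ I, b ≠ a ∧ t.rel a b) ∧
  (∀ a ∈ I, ∀ c ∈ I, t.rel a c → {b : ℤ | t.rel a b ∧ t.rel b c}.Finite)

/-- A block is waxing if `a ≼ a + n` for every `a` in it. -/
def Waxing (t : TITO n) (I : Set ℤ) : Prop := ∀ a ∈ I, t.rel a (a + n)

/-- A block is waning if `a + n ≼ a` for every `a` in it. -/
def Waning (t : TITO n) (I : Set ℤ) : Prop := ∀ a ∈ I, t.rel (a + n) a

/-- A TITO is real if `a ≼ a + n` whenever the residue class of `a` mod `n` is order-convex. -/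
def IsReal (t : TITO n) : Prop :=
  ∀ a : ℤ, t.OrderConvex {x : ℤ | ∃ k : ℤ, x = a + k * n} → t.rel a (a + n)

/-- A TITO is co-real if `a + n ≼ a` whenever the residue class of `a` mod `n` is order-convex. -/
def IsCoReal (t : TITO n) : Prop :=
  ∀ a : ℤ, t.OrderConvex {x : ℤ | ∃ k : ℤ, x = a + k * n} → t.rel (a + n) a

/-- `(a, b)` with `a < b` is a lower wall if `b ≼ a` is a cover relation of the total order. -/
def LowerWall (t : TITO n) (a b : ℤ) : Prop :=
  a < b ∧ t.rel b a ∧ ∀ z : ℤ, z ≠ a → z ≠ b → ¬ (t.rel b z ∧ t.rel z a)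

end TITO
namespace TitoAux

variable {n : ℕ}

/-- The data of a 312-avoiding TITO: its inversion relation. -/
def Good (n : ℕ) (Q : ℤ → ℤ → Prop) : Prop :=
  (∀ a b, Q a b → a < b) ∧
  (∀ a b c, Q a c → a < b → b < c → Q a b) ∧
  (∀ a b c, Q a b → Q b c → Q a c) ∧
  (∀ a b, Q a b ↔ Q (a + n) (b + n))

def QOf (t : TITO n) : ℤ → ℤ → Prop := fun a b => a < b ∧ t.rel b a

lemma tito_ext {t₁ t₂ : TITO n} (h : t₁.rel = t₂.rel) : t₁ = t₂ := by
  cases t₁; cases t₂; simp_all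

/-- Build a TITO from a good inversion relation. -/
def TOf (n : ℕ) (Q : ℤ → ℤ → Prop) (hQ : Good n Q) : TITO n where
  rel x y := x = y ∨ (x < y ∧ ¬ Q x y) ∨ (y < x ∧ Q y x)
  refl _ := Or.inl rfl
  antisymm a b hab hba := by
    rcases hab with h | ⟨h, hq⟩ | ⟨h, hq⟩ <;>
      rcases hba with h' | ⟨h', hq'⟩ | ⟨h', hq'⟩ <;>
      first | omega | exact absurd hq' hq | exact absurd hq hq'
  trans a b c hab hbc := by
    obtain ⟨hlt, hideal, htr, _⟩ := hQ
    rcases hab with rfl | ⟨h1, hq1⟩ | ⟨h1, hq1⟩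
    · exact hbc
    · rcases hbc with rfl | ⟨h2, hq2⟩ | ⟨h2, hq2⟩
      · exact Or.inr (Or.inl ⟨h1, hq1⟩)
      · exact Or.inr (Or.inl ⟨by omega, fun hq => hq1 (hideal a b c hq h1 h2)⟩)
      · rcases lt_trichotomy a c with h3 | rfl | h3
        · exact Or.inr (Or.inl ⟨h3, fun hq => hq1 (htr a c b hq hq2)⟩)
        · exact Or.inl rfl
        · exact Or.inr (Or.inr ⟨h3, hideal c a b hq2 h3 h1⟩)
    · rcases hbc with rfl | ⟨h2, hq2⟩ | ⟨h2, hq2⟩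
      · exact Or.inr (Or.inr ⟨h1, hq1⟩)
      · rcases lt_trichotomy a c with h3 | rfl | h3
        · exact Or.inr (Or.inl ⟨h3, fun hq => hq2 (htr b a c hq1 hq)⟩)
        · exact Or.inl rfl
        · exact absurd (hideal b c a hq1 h2 h3) hq2
      · exact Or.inr (Or.inr ⟨by omega, htr c b a hq2 hq1⟩)
  total a b := by
    rcases lt_trichotomy a b with h | rfl | h
    · by_cases hq : Q a b
      · exact Or.inr (Or.inr (Or.inr ⟨h, hq⟩))
      · exact Or.inl (Or.inr (Or.inl ⟨h, hq⟩))
    · exact Or.inl (Or.inl rfl)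
    · by_cases hq : Q b a
      · exact Or.inl (Or.inr (Or.inr ⟨h, hq⟩))
      · exact Or.inr (Or.inr (Or.inl ⟨h, hq⟩))
  invariant a b := by
    obtain ⟨_, _, _, hper⟩ := hQ
    constructor
    · rintro (rfl | ⟨h, hq⟩ | ⟨h, hq⟩)
      · exact Or.inl rfl
      · exact Or.inr (Or.inl ⟨by omega, fun hq' => hq ((hper a b).mpr hq')⟩)
      · exact Or.inr (Or.inr ⟨by omega, (hper b a).mp hq⟩)
    · rintro (h | ⟨h, hq⟩ | ⟨h, hq⟩)
      · exact Or.inl (by omega)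
      · exact Or.inr (Or.inl ⟨by omega, fun hq' => hq ((hper a b).mp hq')⟩)
      · exact Or.inr (Or.inr ⟨by omega, (hper b a).mpr hq⟩)

lemma avoids312_TOf (Q : ℤ → ℤ → Prop) (hQ : Good n Q) : (TOf n Q hQ).Avoids312 := by
  rintro ⟨a, b, c, hab, hbc, hca, hab'⟩
  obtain ⟨hlt, hideal, _, _⟩ := hQ
  rcases hca with rfl | ⟨h, _⟩ | ⟨h, hq⟩
  · omega
  · omega
  · rcases hab' with rfl | ⟨h', hq'⟩ | ⟨h', _⟩
    · omega
    · exact hq' (hideal a b c hq hab hbc)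
    · omega

lemma good_QOf {t : TITO n} (ht : t.Avoids312) : Good n (QOf t) := by
  refine ⟨fun a b h => h.1, ?_, ?_, ?_⟩
  · rintro a b c ⟨hac, hrel⟩ hab hbc
    refine ⟨hab, ?_⟩
    rcases t.total b a with h | h
    · exact h
    · exact absurd ⟨a, b, c, hab, hbc, hrel, h⟩ ht
  · rintro a b c ⟨h1, r1⟩ ⟨h2, r2⟩
    exact ⟨by omega, t.trans c b a r2 r1⟩
  · intro a b
    constructor
    · rintro ⟨h, r⟩; exact ⟨by omega, (t.invariant b a).mp r⟩
    · rintro ⟨h, r⟩; exact ⟨by omega, (t.invariant b a).mpr r⟩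

lemma rel_iff_not_rel {t : TITO n} {x y : ℤ} (hxy : x ≠ y) : t.rel x y ↔ ¬ t.rel y x :=
  ⟨fun h h' => hxy (t.antisymm x y h h'), fun h => (t.total x y).resolve_right h⟩

lemma tito_eq_of_qof_eq {t t' : TITO n} (h : QOf t = QOf t') : t = t' := by
  apply tito_ext
  funext x y
  apply propext
  have hq : ∀ a b : ℤ, (a < b ∧ t.rel b a) ↔ (a < b ∧ t'.rel b a) := fun a b =>
    iff_of_eq (congrFun (congrFun h a) b)
  rcases lt_trichotomy x y with hxy | rfl | hxy
  · rw [rel_iff_not_rel (by omega : x ≠ y), rel_iff_not_rel (by omega : x ≠ y)]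
    constructor
    · exact fun hr hr' => hr ((hq x y).mpr ⟨hxy, hr'⟩).2
    · exact fun hr hr' => hr ((hq x y).mp ⟨hxy, hr'⟩).2
  · exact ⟨fun _ => t'.refl x, fun _ => t.refl x⟩
  · constructor
    · intro hr; exact ((hq y x).mp ⟨hxy, hr⟩).2
    · intro hr; exact ((hq y x).mpr ⟨hxy, hr⟩).2

lemma TOf_QOf {t : TITO n} (ht : t.Avoids312) : TOf n (QOf t) (good_QOf ht) = t := by
  apply tito_ext
  funext x y
  apply propext
  show (x = y ∨ (x < y ∧ ¬ (x < y ∧ t.rel y x)) ∨ (y < x ∧ (y < x ∧ t.rel x y))) ↔ t.rel x y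
  constructor
  · rintro (rfl | ⟨h, hq⟩ | ⟨h, _, hq⟩)
    · exact t.refl x
    · rcases t.total x y with h' | h'
      · exact h'
      · exact absurd ⟨h, h'⟩ hq
    · exact hq
  · intro hr
    rcases lt_trichotomy x y with h | rfl | h
    · refine Or.inr (Or.inl ⟨h, ?_⟩)
      rintro ⟨-, h'⟩
      exact absurd (t.antisymm x y hr h') (by omega)
    · exact Or.inl rfl
    · exact Or.inr (Or.inr ⟨h, h, hr⟩)

lemma QOf_TOf {Q : ℤ → ℤ → Prop} (hQ : Good n Q) : QOf (TOf n Q hQ) = Q := by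
  funext a b
  apply propext
  show (a < b ∧ (b = a ∨ (b < a ∧ ¬ Q b a) ∨ (a < b ∧ Q a b))) ↔ Q a b
  constructor
  · rintro ⟨hab, rfl | ⟨h, _⟩ | ⟨_, hq⟩⟩
    · omega
    · omega
    · exact hq
  · intro hq
    have hab := hQ.1 a b hq
    exact ⟨hab, Or.inr (Or.inr ⟨hab, hq⟩)⟩

end TitoAux
namespace TitoAux

variable {n : ℕ}

/-- The dual inversion relation (reflect at -1/2, take "innermost coverer gap" structure). -/
def DQ (Q : ℤ → ℤ → Prop) : ℤ → ℤ → Prop :=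
  fun q c => q < c ∧ ∀ p : ℤ, -1 - c ≤ p → p ≤ -2 - q → ¬ Q p (-1 - q)

lemma good_DQ {Q : ℤ → ℤ → Prop} (hQ : Good n Q) : Good n (DQ Q) := by
  obtain ⟨hlt, hideal, htr, hper⟩ := hQ
  refine ⟨fun a b h => h.1, ?_, ?_, ?_⟩
  · rintro q b c ⟨hqc, H⟩ hqb hbc
    exact ⟨hqb, fun p h1 h2 => H p (by omega) h2⟩
  · rintro q r s ⟨hqr, H1⟩ ⟨hrs, H2⟩
    refine ⟨by omega, fun p h1 h2 hp => ?_⟩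
    by_cases hc : -1 - r ≤ p
    · exact H1 p hc h2 hp
    · exact H2 p (by omega) (by omega) (hideal p (-1 - r) (-1 - q) hp (by omega) (by omega))
  · intro q c
    constructor
    · rintro ⟨h, H⟩
      refine ⟨by omega, fun p h1 h2 hp => ?_⟩
      have hp2 := (hper p (-1 - (q + (n:ℤ)))).mp hp
      rw [show -1 - (q + (n:ℤ)) + n = -1 - q by ring] at hp2
      exact H (p + n) (by omega) (by omega) hp2
    · rintro ⟨h, H⟩
      refine ⟨by omega, fun p h1 h2 hp => ?_⟩
      have hp2 := (hper (p - (n:ℤ)) (-1 - (q + (n:ℤ)))).mpr (by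
        rw [show p - (n:ℤ) + n = p by ring, show -1 - (q + (n:ℤ)) + n = -1 - q by ring]
        exact hp)
      exact H (p - n) (by omega) (by omega) hp2

lemma DQ_antitone {Q₁ Q₂ : ℤ → ℤ → Prop} (h : ∀ a b, Q₁ a b → Q₂ a b) :
    ∀ a b, DQ Q₂ a b → DQ Q₁ a b := by
  rintro a b ⟨hab, H⟩
  exact ⟨hab, fun p h1 h2 hp => H p h1 h2 (h p (-1 - a) hp)⟩

lemma DQ_DQ {Q : ℤ → ℤ → Prop} (hQ : Good n Q) : DQ (DQ Q) = Q := by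
  obtain ⟨hlt, hideal, htr, hper⟩ := hQ
  funext q c
  apply propext
  constructor
  · rintro ⟨hqc, H⟩
    have key : ∀ m : ℕ, ∀ v : ℤ, v - q = m → q < v → v ≤ c → Q q v := by
      intro m
      induction m using Nat.strong_induction_on with
      | _ m IH =>
        intro v hm hqv hvc
        have hd : ¬ DQ Q (-1 - v) (-1 - q) := H (-1 - v) (by omega) (by omega)
        rw [DQ] at hd
        push_neg at hd
        obtain ⟨u, hu1, hu2, hu3⟩ := hd (by omega)
        rw [show -1 - (-1 - v) = v by ring] at hu3
        have hu1' : q ≤ u := by omega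
        rcases eq_or_lt_of_le hu1' with rfl | hqu
        · exact hu3
        · have hq_u : Q q u := IH (u - q).toNat (by omega) u (by omega) hqu (by omega)
          exact htr q u v hq_u hu3
    exact key (c - q).toNat c (by omega) hqc le_rfl
  · intro hq
    refine ⟨hlt q c hq, fun p h1 h2 hDp => ?_⟩
    obtain ⟨hplt, Hp⟩ := hDp
    refine Hp q (by omega) (by omega) ?_
    rcases eq_or_lt_of_le (show -1 - p ≤ c by omega) with he | hlt2
    · rwa [he]
    · exact hideal q (-1 - p) c hq (by omega) hlt2

end TitoAux
namespace TitoAux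

variable {n : ℕ}

lemma mem_inversions {t : TITO n} {p : ℤ × ℤ} :
    p ∈ t.Inversions ↔ p.1 < p.2 ∧ t.rel p.2 p.1 := Iff.rfl

lemma inversions_subset_iff {t₁ t₂ : TITO n} :
    t₁.Inversions ⊆ t₂.Inversions ↔ ∀ a b, QOf t₁ a b → QOf t₂ a b := by
  constructor
  · intro h a b hq
    exact h (show (a, b) ∈ t₁.Inversions from hq)
  · intro h p hp
    exact h p.1 p.2 hp

/-- Reflection ``x ↦ -x`` of a TITO. -/
def RT (t : TITO n) : TITO n where
  rel x y := t.rel (-x) (-y)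
  refl a := t.refl (-a)
  antisymm a b h1 h2 := by have := t.antisymm _ _ h1 h2; omega
  trans a b c h1 h2 := t.trans _ _ _ h1 h2
  total a b := t.total _ _
  invariant a b := by
    have h := t.invariant (-(a + (n:ℤ))) (-(b + (n:ℤ)))
    rw [show -(a + (n:ℤ)) + n = -a by ring, show -(b + (n:ℤ)) + n = -b by ring] at h
    exact h.symm

lemma RT_rel {t : TITO n} {x y : ℤ} : (RT t).rel x y ↔ t.rel (-x) (-y) := Iff.rfl

lemma RT_RT (t : TITO n) : RT (RT t) = t := by
  apply tito_ext
  funext x y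
  show (t.rel (- -x) (- -y)) = t.rel x y
  rw [neg_neg, neg_neg]

lemma avoids132_RT {t : TITO n} (ht : t.Avoids312) : (RT t).Avoids132 := by
  rintro ⟨a, b, c, hab, hbc, h1, h2⟩
  exact ht ⟨-c, -b, -a, by omega, by omega, h1, h2⟩

lemma avoids312_RT {t : TITO n} (ht : t.Avoids132) : (RT t).Avoids312 := by
  rintro ⟨a, b, c, hab, hbc, h1, h2⟩
  exact ht ⟨-c, -b, -a, by omega, by omega, h1, h2⟩

lemma R_order (t₁ t₂ : TITO n) :
    t₁.Inversions ⊆ t₂.Inversions ↔ (RT t₂).Inversions ⊆ (RT t₁).Inversions := by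
  constructor
  · intro h p hp
    obtain ⟨hlt, hrel⟩ := mem_inversions.mp hp
    refine mem_inversions.mpr ⟨hlt, ?_⟩
    by_contra hc
    have h2 : t₁.rel (-p.1) (-p.2) := (t₁.total _ _).resolve_left hc
    have h4 := h (show ((-p.2, -p.1) : ℤ × ℤ) ∈ t₁.Inversions from ⟨by omega, h2⟩)
    have := t₂.antisymm _ _ hrel h4.2
    omega
  · intro h p hp
    obtain ⟨hlt, hrel⟩ := mem_inversions.mp hp
    refine mem_inversions.mpr ⟨hlt, ?_⟩
    by_contra hc
    have h2 : t₂.rel p.1 p.2 := (t₂.total _ _).resolve_left hc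
    have h3 : ((-p.2, -p.1) : ℤ × ℤ) ∈ (RT t₂).Inversions := by
      refine ⟨by omega, ?_⟩
      show t₂.rel (- -p.1) (- -p.2)
      rw [neg_neg, neg_neg]; exact h2
    have h4 := h h3
    have h5 : t₁.rel p.1 p.2 := by
      have := h4.2
      rwa [RT_rel, neg_neg, neg_neg] at this
    have := t₁.antisymm _ _ hrel h5
    omega

end TitoAux
namespace TitoAux

variable {n : ℕ}

lemma good_shift {Q : ℤ → ℤ → Prop} (hQ : Good n Q) (a b : ℤ) :
    ∀ k : ℤ, Q (a + k * n) (b + k * n) ↔ Q a b := by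
  have hper := hQ.2.2.2
  intro k
  induction k using Int.induction_on with
  | zero => simp
  | succ k ih =>
      rw [show a + ((k:ℤ) + 1) * n = (a + (k:ℤ) * n) + n by ring,
        show b + ((k:ℤ) + 1) * n = (b + (k:ℤ) * n) + n by ring,
        ← hper (a + (k:ℤ) * n) (b + (k:ℤ) * n)]
      exact ih
  | pred k ih =>
      rw [show a + (-(k:ℤ) - 1) * n = (a + (-(k:ℤ)) * n) - n by ring,
        show b + (-(k:ℤ) - 1) * n = (b + (-(k:ℤ)) * n) - n by ring]
      rw [hper (a + (-(k:ℤ)) * n - n) (b + (-(k:ℤ)) * n - n)]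
      rw [show a + -(k:ℤ) * n - n + n = a + (-(k:ℤ)) * n by ring,
        show b + -(k:ℤ) * n - n + n = b + (-(k:ℤ)) * n by ring]
      exact ih

lemma good_chain {Q : ℤ → ℤ → Prop} (hQ : Good n Q) {a : ℤ} (h : Q a (a + n)) :
    ∀ k : ℕ, Q a (a + ((k:ℤ) + 1) * n) := by
  intro k
  induction k with
  | zero => simpa using h
  | succ k ih =>
      have h2 : Q (a + ((k:ℤ) + 1) * n) (a + n + ((k:ℤ) + 1) * n) :=
        (good_shift hQ a (a + n) ((k:ℤ) + 1)).mpr h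
      have h3 := hQ.2.2.1 _ _ _ ih h2
      rw [show a + (((k+1:ℕ):ℤ) + 1) * n = a + (n:ℤ) + ((k:ℤ) + 1) * n by push_cast; ring]
      exact h3

lemma good_ray {Q : ℤ → ℤ → Prop} (hQ : Good n Q) (hn : 0 < n) {a b : ℤ}
    (h : Q a (a + n)) (hb : a < b) : Q a b := by
  set k := (b - a).toNat with hk
  have hchain := good_chain hQ h k
  have h2 : ((k:ℤ) + 1) * 1 ≤ ((k:ℤ) + 1) * n :=
    mul_le_mul_of_nonneg_left (by exact_mod_cast hn) (by positivity)
  have hbk : b - a ≤ (k:ℤ) := by omega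
  have hblt : b < a + ((k:ℤ) + 1) * n := by nlinarith
  exact hQ.2.1 a b _ hchain hb hblt

lemma good_cap {Q : ℤ → ℤ → Prop} (hQ : Good n Q) (hn : 0 < n) {a b : ℤ}
    (hab : a < b) (hlen : (n:ℤ) ≤ b - a) : Q a b ↔ Q a (a + n) := by
  constructor
  · intro h
    rcases eq_or_lt_of_le hlen with he | hlt
    · rw [show a + (n:ℤ) = b by omega]; exact h
    · exact hQ.2.1 a (a + n) b h (by omega) (by omega)
  · intro h
    exact good_ray hQ hn h hab

lemma W_mono {t t' : TITO n} (hn : 0 < n) (ht : t.Avoids312) (ht' : t'.Avoids312)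
    (hW : ∀ i j : Fin n,
      t.rel ((i.val : ℤ) + (j.val : ℤ) + 1) (i.val : ℤ) ↔
      t'.rel ((i.val : ℤ) + (j.val : ℤ) + 1) (i.val : ℤ)) :
    ∀ a b, QOf t a b → QOf t' a b := by
  intro a b hab
  have hQ := good_QOf ht
  have hQ' := good_QOf ht'
  have h1 : a < b := hab.1
  obtain ⟨r, k, hr0, hrn, hrk⟩ : ∃ r k : ℤ, 0 ≤ r ∧ r < n ∧ a = r + k * n := by
    refine ⟨a % n, a / n, Int.emod_nonneg a (by exact_mod_cast hn.ne'),
      Int.emod_lt_of_pos a (by exact_mod_cast hn), ?_⟩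
    rw [mul_comm]; exact (Int.emod_add_mul_ediv a n).symm
  have shift : ∀ (s : TITO n), s.Avoids312 → (QOf s a b ↔ QOf s r (r + (b - a))) := by
    intro s hs
    have h2 := good_shift (good_QOf hs) r (r + (b - a)) k
    rw [show r + k * n = a from hrk.symm,
      show r + (b - a) + k * n = b by rw [hrk]; ring] at h2
    exact h2
  have winfact : ∀ (s : TITO n), ∀ j : ℤ, 1 ≤ j → j ≤ n →
      (QOf s r (r + j) ↔ s.rel ((r.toNat : ℤ) + ((j - 1).toNat : ℤ) + 1) (r.toNat : ℤ)) := by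
    intro s j hj1 hjn
    have e1 : ((r.toNat : ℕ) : ℤ) = r := by omega
    have e2 : (((j - 1).toNat : ℕ) : ℤ) = j - 1 := by omega
    rw [e1, e2, show r + (j - 1) + 1 = r + j by ring]
    simp only [QOf]
    exact ⟨fun h => h.2, fun h => ⟨by omega, h⟩⟩
  by_cases hsmall : b - a ≤ n
  · have hw := hW ⟨r.toNat, by omega⟩ ⟨(b - a - 1).toNat, by omega⟩
    have h3 := (winfact t (b - a) (by omega) (by omega)).mp ((shift t ht).mp hab)
    exact (shift t' ht').mpr ((winfact t' (b - a) (by omega) (by omega)).mpr (hw.mp h3))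
  · have hw := hW ⟨r.toNat, by omega⟩ ⟨((n : ℤ) - 1).toNat, by omega⟩
    have h2 := (shift t ht).mp hab
    have h3 : QOf t r (r + n) :=
      (good_cap hQ hn (show r < r + (b - a) by omega)
        (show (n:ℤ) ≤ (r + (b - a)) - r by omega)).mp h2
    have h4 := (winfact t (n : ℤ) (by omega) le_rfl).mp h3
    have h5 : QOf t' r (r + n) := (winfact t' (n : ℤ) (by omega) le_rfl).mpr (hw.mp h4)
    have h6 : QOf t' r (r + (b - a)) :=
      (good_cap hQ' hn (show r < r + (b - a) by omega)
        (show (n:ℤ) ≤ (r + (b - a)) - r by omega)).mpr h5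
    exact (shift t' ht').mpr h6

lemma finite312 (hn : 0 < n) : Finite {t : TITO n // t.Avoids312} := by
  have hinj : Function.Injective (fun (t : {t : TITO n // t.Avoids312}) =>
      (fun i j : Fin n => t.val.rel ((i.val : ℤ) + (j.val : ℤ) + 1) (i.val : ℤ))) := by
    intro t t' h
    have hW : ∀ i j : Fin n,
        t.val.rel ((i.val : ℤ) + (j.val : ℤ) + 1) (i.val : ℤ) ↔
        t'.val.rel ((i.val : ℤ) + (j.val : ℤ) + 1) (i.val : ℤ) := fun i j =>
      iff_of_eq (congrFun (congrFun h i) j)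
    apply Subtype.ext
    apply tito_eq_of_qof_eq
    funext a b
    apply propext
    exact ⟨fun hq => W_mono hn t.prop t'.prop hW a b hq,
      fun hq => W_mono hn t'.prop t.prop (fun i j => (hW i j).symm) a b hq⟩
  exact Finite.of_injective _ hinj

def psiSub (n : ℕ) (x : {t : TITO n // t.Avoids312}) : {t : TITO n // t.Avoids312} :=
  ⟨TOf n (DQ (QOf x.val)) (good_DQ (good_QOf x.prop)),
    avoids312_TOf (DQ (QOf x.val)) (good_DQ (good_QOf x.prop))⟩

lemma QOf_psiSub (x : {t : TITO n // t.Avoids312}) :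
    QOf (psiSub n x).val = DQ (QOf x.val) := QOf_TOf (good_DQ (good_QOf x.prop))

lemma psiSub_invol : Function.Involutive (psiSub n) := by
  intro x
  apply Subtype.ext
  apply tito_eq_of_qof_eq
  rw [QOf_psiSub, QOf_psiSub, DQ_DQ (good_QOf x.prop)]

lemma psiSub_order (x y : {t : TITO n // t.Avoids312}) :
    x.val.Inversions ⊆ y.val.Inversions ↔
      (psiSub n y).val.Inversions ⊆ (psiSub n x).val.Inversions := by
  rw [inversions_subset_iff, inversions_subset_iff, QOf_psiSub, QOf_psiSub]
  constructor
  · exact fun h => DQ_antitone h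
  · intro h
    have h2 := DQ_antitone h
    rw [DQ_DQ (good_QOf x.prop), DQ_DQ (good_QOf y.prop)] at h2
    exact h2

def phiSub (n : ℕ) (x : {t : TITO n // t.Avoids312}) : {t : TITO n // t.Avoids132} :=
  ⟨RT (psiSub n x).val, avoids132_RT (psiSub n x).prop⟩

def phiInv (n : ℕ) (y : {t : TITO n // t.Avoids132}) : {t : TITO n // t.Avoids312} :=
  psiSub n ⟨RT y.val, avoids312_RT y.prop⟩

lemma phiSub_left_inverse (x : {t : TITO n // t.Avoids312}) : phiInv n (phiSub n x) = x := by
  have h : (⟨RT (phiSub n x).val, avoids312_RT (phiSub n x).prop⟩ :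
      {t : TITO n // t.Avoids312}) = psiSub n x := Subtype.ext (RT_RT _)
  show psiSub n ⟨RT (phiSub n x).val, avoids312_RT (phiSub n x).prop⟩ = x
  rw [h]
  exact psiSub_invol x

lemma phiSub_right_inverse (y : {t : TITO n // t.Avoids132}) : phiSub n (phiInv n y) = y := by
  apply Subtype.ext
  show RT (psiSub n (psiSub n ⟨RT y.val, avoids312_RT y.prop⟩)).val = y.val
  have hinv := psiSub_invol (n := n) ⟨RT y.val, avoids312_RT y.prop⟩
  rw [hinv]
  exact RT_RT _

lemma phiSub_order (x y : {t : TITO n // t.Avoids312}) :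
    x.val.Inversions ⊆ y.val.Inversions ↔
      (phiSub n x).val.Inversions ⊆ (phiSub n y).val.Inversions := by
  show _ ↔ (RT (psiSub n x).val).Inversions ⊆ (RT (psiSub n y).val).Inversions
  rw [← R_order (psiSub n y).val (psiSub n x).val]
  exact psiSub_order x y

end TitoAux
theorem stmt6 (n : ℕ) (hn : 2 ≤ n) :
    {t : TITO n | t.Avoids312}.Finite ∧
    (∃ φ : {t : TITO n // t.Avoids312} → {t : TITO n // t.Avoids132},
      Function.Bijective φ ∧
      ∀ x y : {t : TITO n // t.Avoids312},
        x.val.Inversions ⊆ y.val.Inversions ↔ (φ x).val.Inversions ⊆ (φ y).val.Inversions) ∧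
    (∃ ψ : {t : TITO n // t.Avoids312} → {t : TITO n // t.Avoids312},
      Function.Bijective ψ ∧
      ∀ x y : {t : TITO n // t.Avoids312},
        x.val.Inversions ⊆ y.val.Inversions ↔ (ψ y).val.Inversions ⊆ (ψ x).val.Inversions) := by
  have hn0 : 0 < n := by omega
  refine ⟨?_, ?_, ?_⟩
  · have h := TitoAux.finite312 (n := n) hn0
    exact Set.finite_coe_iff.mp h
  · refine ⟨TitoAux.phiSub n, ?_, TitoAux.phiSub_order⟩
    exact Function.bijective_iff_has_inverse.mpr
      ⟨TitoAux.phiInv n, TitoAux.phiSub_left_inverse, TitoAux.phiSub_right_inverse⟩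
  · exact ⟨TitoAux.psiSub n, (TitoAux.psiSub_invol).bijective, TitoAux.psiSub_order⟩
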